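/- Let n = 6m with m ≥ 2, and k = 3m - 1 with k ≡ ±1 (mod 6) (i.e. m even), so that GP(n, n/2 - 1) is vertex-transitive and 3-RDR. Then every edge of GP(6m, 3m-1) lies in exactly two 6-cycles; in particular the graph is girth-regular with signature (2,2,2) and girth 6. -/

import Mathlib

open SimpleGraph Finset

/-- A `k`-rainbow dominating function on a graph `G`: whenever `f v = ∅`,
every color appears on some neighbor of `v`. -/
def IsKRDF {V : Type*} (G : SimpleGraph V) (k : ℕ) (f : V → Finset (Fin k)) : Prop :=
  ∀ v, f v = ∅ → ∀ c : Fin k, ∃ u, G.Adj v u ∧ c ∈ f u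

/-- The weight of a rainbow dominating function. -/
def rdfWeight {V : Type*} [Fintype V] {k : ℕ} (f : V → Finset (Fin k)) : ℕ :=
  ∑ v, (f v).card

/-- The `k`-rainbow domination number of `G`. -/
noncomputable def rainbowDomNum {V : Type*} [Fintype V] (G : SimpleGraph V) (k : ℕ) : ℕ :=
  sInf {w | ∃ f, IsKRDF G k f ∧ rdfWeight f = w}

/-- The generalized Petersen graph `GP(n,k)`: outer vertices `Sum.inl i`, inner
vertices `Sum.inr i`, with outer edges, spokes and inner edges. -/
def GP (n k : ℕ) : SimpleGraph (ZMod n ⊕ ZMod n) where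
  Adj x y := x ≠ y ∧
    (match x, y with
     | Sum.inl i, Sum.inl j => j = i + 1 ∨ i = j + 1
     | Sum.inl i, Sum.inr j => i = j
     | Sum.inr i, Sum.inl j => i = j
     | Sum.inr i, Sum.inr j => j = i + (k : ZMod n) ∨ i = j + (k : ZMod n))
  symm := ⟨by
    rintro (i | i) (j | j) ⟨hne, h⟩ <;>
      refine ⟨hne.symm, ?_⟩ <;> simp only at h ⊢ <;> tauto⟩
  loopless := ⟨by rintro (i | i) ⟨hne, -⟩ <;> exact hne rfl⟩

open scoped Classical in
/-- A finset of edges is (the edge set of) a `6`-cycle of `X` if it is the set of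
edges traversed by an injective closed walk indexed by `ZMod 6`. -/
def Is6CycleEdgeSet {V : Type*} (X : SimpleGraph V) (s : Finset (Sym2 V)) : Prop :=
  ∃ C : ZMod 6 → V, Function.Injective C ∧ (∀ t : ZMod 6, X.Adj (C t) (C (t + 1))) ∧
    s = Finset.image (fun t : ZMod 6 => s(C t, C (t + 1))) Finset.univ

namespace GPaux

def K (m : ℕ) : ZMod (6*m) := ((3*m-1 : ℕ) : ZMod (6*m))

lemma hKcast (m : ℕ) (hm2 : 2 ≤ m) : K m = ((3*(m:ℤ)-1 : ℤ) : ZMod (6*m)) := by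
  have h1 : (1:ℕ) ≤ 3*m := by omega
  rw [K]; push_cast [Nat.cast_sub h1]; ring

lemma znz (m : ℕ) (hm2 : 2 ≤ m) (a b : ℤ)
    (ha : -6 ≤ a ∧ a ≤ 6) (hb : -6 ≤ b ∧ b ≤ 6)
    (h : ∀ t : ℤ, -3 ≤ t → t ≤ 3 → a + b*(3*(m:ℤ)-1) ≠ 6*m*t) :
    ((a : ℤ) : ZMod (6*m)) + ((b : ℤ) : ZMod (6*m)) * K m ≠ 0 := by
  rw [hKcast m hm2, show ((a : ℤ) : ZMod (6*m)) + ((b : ℤ) : ZMod (6*m)) * (((3*(m:ℤ)-1 : ℤ)) : ZMod (6*m))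
      = (((a + b*(3*(m:ℤ)-1)) : ℤ) : ZMod (6*m)) by push_cast; ring]
  rw [Ne, ZMod.intCast_zmod_eq_zero_iff_dvd]
  rintro ⟨t, ht⟩
  have hm' : (2:ℤ) ≤ (m:ℤ) := by exact_mod_cast hm2
  have h3 : (0:ℤ) ≤ 3*(m:ℤ) - 1 := by linarith
  have hb1 := mul_le_mul_of_nonneg_right hb.2 h3
  have hb2 := mul_le_mul_of_nonneg_right hb.1 h3
  have h6 : (0:ℤ) ≤ 6*(m:ℤ) := by linarith
  push_cast at ht
  have hta : -3 ≤ t := by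
    by_contra hc; push_neg at hc
    have h4 : t ≤ -4 := by linarith
    have := mul_le_mul_of_nonneg_left h4 h6
    linarith
  have htb : t ≤ 3 := by
    by_contra hc; push_neg at hc
    have h4 : 4 ≤ t := by linarith
    have := mul_le_mul_of_nonneg_left h4 h6
    linarith
  exact h t hta htb (by linarith)

lemma h2K (m : ℕ) (hm2 : 2 ≤ m) (hme : m % 2 = 0) : (2 : ZMod (6*m)) + 2 * K m = 0 := by
  obtain ⟨j, rfl⟩ : ∃ j, m = 2*j := ⟨m/2, by omega⟩
  rw [hKcast _ hm2, show (2 : ZMod (6*(2*j))) + 2 * (((3*((2*j:ℕ):ℤ)-1 : ℤ)) : ZMod (6*(2*j)))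
      = (((2 + 2*(3*((2*j:ℕ):ℤ)-1)) : ℤ) : ZMod (6*(2*j))) by push_cast; ring]
  rw [ZMod.intCast_zmod_eq_zero_iff_dvd]
  exact ⟨1, by push_cast; ring⟩

lemma const_of_step {α : Type*} {L : ℕ} [NeZero L] (g : ZMod L → α)
    (h : ∀ t, g (t+1) = g t) : ∀ t, g t = g 0 := by
  have key : ∀ j : ℕ, g (j : ZMod L) = g 0 := by
    intro j
    induction j with
    | zero => simp
    | succ n ih =>
        rw [show ((n+1 : ℕ) : ZMod L) = ((n : ℕ) : ZMod L) + 1 by push_cast; ring, h]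
        exact ih
  intro t
  have := key t.val
  rwa [ZMod.natCast_rightInverse t] at this

lemma comb3 : ∀ f : ZMod 3 → Bool,
    (∃ t, f (t+1) ≠ f t ∧ f (t+1+1) ≠ f (t+1)) ∨ (∀ t, f (t+1) = f t) := by decide

lemma comb4 : ∀ f : ZMod 4 → Bool,
    (∃ t, f (t+1) ≠ f t ∧ f (t+1+1) ≠ f (t+1)) ∨ (∀ t, f (t+1) = f t) ∨
    (∃ t, f (t+1) ≠ f t ∧ f (t+1+1) = f (t+1) ∧ f (t+2+1) ≠ f (t+2) ∧
      f (t+3+1) = f (t+3)) := by decide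

lemma comb5 : ∀ f : ZMod 5 → Bool,
    (∃ t, f (t+1) ≠ f t ∧ f (t+1+1) ≠ f (t+1)) ∨ (∀ t, f (t+1) = f t) ∨
    (∃ t, f (t+1) ≠ f t ∧ f (t+1+1) = f (t+1) ∧ f (t+2+1) ≠ f (t+2) ∧
      f (t+3+1) = f (t+3) ∧ f (t+4+1) = f (t+4)) := by decide

lemma comb6 : ∀ f : ZMod 6 → Bool,
    (∃ t, f (t+1) ≠ f t ∧ f (t+1+1) ≠ f (t+1)) ∨ (∀ t, f (t+1) = f t) ∨
    (∃ t, f (t+1) ≠ f t ∧ f (t+1+1) = f (t+1) ∧ f (t+2+1) ≠ f (t+2) ∧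
      f (t+3+1) = f (t+3) ∧ f (t+4+1) = f (t+4) ∧ f (t+5+1) = f (t+5)) ∨
    (∃ t, f (t+1) ≠ f t ∧ f (t+1+1) = f (t+1) ∧ f (t+2+1) = f (t+2) ∧
      f (t+3+1) ≠ f (t+3) ∧ f (t+4+1) = f (t+4) ∧ f (t+5+1) = f (t+5)) := by decide

lemma boolcase : ∀ a b c : Bool, b ≠ a → c ≠ b → c = a := by decide

section cyc

variable {m : ℕ} {L : ℕ} [NeZero L]
variable (C : ZMod L → ZMod (6*m) ⊕ ZMod (6*m))

def side (t : ZMod L) : Bool := (C t).isLeft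

def pos (t : ZMod L) : ZMod (6*m) := Sum.elim id id (C t)

omit [NeZero L] in
lemma C_eq (t : ZMod L) : C t = if side C t then Sum.inl (pos C t) else Sum.inr (pos C t) := by
  cases h : C t <;> simp [side, pos, h]

omit [NeZero L] in
lemma C_inl (t : ZMod L) (h : side C t = true) : C t = Sum.inl (pos C t) := by
  rw [C_eq C t, h]; simp

omit [NeZero L] in
lemma C_inr (t : ZMod L) (h : side C t = false) : C t = Sum.inr (pos C t) := by
  rw [C_eq C t, h]; simp

variable (hinj : Function.Injective C)
variable (hadj : ∀ t, (GP (6*m) (3*m-1)).Adj (C t) (C (t+1)))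

omit [NeZero L] in
include hadj in
lemma step (t : ZMod L) :
    (side C t = true ∧ side C (t+1) = true ∧
      (pos C (t+1) = pos C t + 1 ∨ pos C t = pos C (t+1) + 1)) ∨
    (side C t = true ∧ side C (t+1) = false ∧ pos C (t+1) = pos C t) ∨
    (side C t = false ∧ side C (t+1) = true ∧ pos C (t+1) = pos C t) ∨
    (side C t = false ∧ side C (t+1) = false ∧
      (pos C (t+1) = pos C t + K m ∨ pos C t = pos C (t+1) + K m)) := by
  obtain ⟨-, hrel⟩ := hadj t
  cases h1 : C t with
  | inl i => cases h2 : C (t+1) with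
    | inl j =>
        refine Or.inl ⟨by simp [side, h1], by simp [side, h2], ?_⟩
        rw [h1, h2] at hrel
        simpa only [pos, h1, h2, Sum.elim_inl, id] using hrel
    | inr j =>
        refine Or.inr (Or.inl ⟨by simp [side, h1], by simp [side, h2], ?_⟩)
        rw [h1, h2] at hrel
        have : i = j := hrel
        simp [pos, h1, h2, this]
  | inr i => cases h2 : C (t+1) with
    | inl j =>
        refine Or.inr (Or.inr (Or.inl ⟨by simp [side, h1], by simp [side, h2], ?_⟩))
        rw [h1, h2] at hrel
        have : i = j := hrel
        simp [pos, h1, h2, this]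
    | inr j =>
        refine Or.inr (Or.inr (Or.inr ⟨by simp [side, h1], by simp [side, h2], ?_⟩))
        rw [h1, h2] at hrel
        have : j = i + ((3*m-1 : ℕ) : ZMod (6*m)) ∨ i = j + ((3*m-1 : ℕ) : ZMod (6*m)) := hrel
        simpa only [pos, h1, h2, Sum.elim_inr, id, K] using this

omit [NeZero L] in
include hinj in
lemma inj' {s t : ZMod L} (h1 : side C s = side C t) (h2 : pos C s = pos C t) : s = t :=
  hinj (by rw [C_eq C s, C_eq C t, h1, h2])

omit [NeZero L] in
include hinj in
lemma no_return (hL2 : (2 : ZMod L) ≠ 0) {t : ZMod L}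
    (hs : side C (t+2) = side C t) (hp : pos C (t+2) = pos C t) : False := by
  have := inj' C hinj hs hp
  exact hL2 (by linear_combination this)

omit [NeZero L] in
include hadj in
lemma spoke_pos {t : ZMod L} (h : side C t ≠ side C (t+1)) : pos C (t+1) = pos C t := by
  rcases step C hadj t with ⟨h1, h2, -⟩ | ⟨-, -, h3⟩ | ⟨-, -, h3⟩ | ⟨h1, h2, -⟩ <;>
    first | exact h3 | (exact absurd (h1.trans h2.symm) h)

omit [NeZero L] in
include hadj in
lemma sameside_step {t : ZMod L} (h : side C t = side C (t+1)) :
    (side C t = true ∧ (pos C (t+1) = pos C t + 1 ∨ pos C (t+1) = pos C t - 1)) ∨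
    (side C t = false ∧ (pos C (t+1) = pos C t + K m ∨ pos C (t+1) = pos C t - K m)) := by
  rcases step C hadj t with ⟨h1, h2, h3⟩ | ⟨h1, h2, -⟩ | ⟨h1, h2, -⟩ | ⟨h1, h2, h3⟩
  · exact Or.inl ⟨h1, h3.imp (fun h => h) (fun h => by linear_combination -h)⟩
  · rw [h, h2] at h1; exact absurd h1 (by simp)
  · rw [h, h2] at h1; exact absurd h1 (by simp)
  · exact Or.inr ⟨h1, h3.imp (fun h => h) (fun h => by linear_combination -h)⟩

include hinj hadj in
lemma pair_eq (hL2 : (2 : ZMod L) ≠ 0) {t : ZMod L}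
    (hs1 : side C t = side C (t+1)) (hs2 : side C (t+1) = side C (t+2)) :
    pos C (t+2) - pos C (t+1) = pos C (t+1) - pos C t := by
  have e : t+1+1 = t+2 := by ring
  have hs2'' : side C (t+1) = side C (t+1+1) := by rw [e]; exact hs2
  rcases sameside_step C hadj hs1 with ⟨hb1, hd1⟩ | ⟨hb1, hd1⟩ <;>
    rcases sameside_step C hadj hs2'' with ⟨hb2, hd2⟩ | ⟨hb2, hd2⟩ <;>
    rw [e] at hd2 <;>
    [skip; (rw [hb1, hb2] at hs1; simp at hs1); (rw [hb1, hb2] at hs1; simp at hs1); skip] <;>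
    rcases hd1 with hd1 | hd1 <;> rcases hd2 with hd2 | hd2 <;>
    first
      | linear_combination hd2 - hd1
      | exact (no_return C hinj hL2 ((hs1.trans hs2).symm) (by linear_combination hd1 + hd2)).elim

include hinj hadj in
lemma adj_spokes (hL2 : (2 : ZMod L) ≠ 0) {t : ZMod L}
    (h1 : side C (t+1) ≠ side C t) (h2 : side C (t+1+1) ≠ side C (t+1)) : False := by
  have p1 := spoke_pos C hadj (Ne.symm h1)
  have p2 := spoke_pos C hadj (Ne.symm h2)
  refine no_return C hinj hL2 (t := t) ?_ ?_
  · rw [show t+2 = t+1+1 by ring]; exact boolcase _ _ _ h1 h2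
  · rw [show t+2 = t+1+1 by ring]; exact p2.trans p1

include hinj hadj in
lemma all_same_sum (hL2 : (2 : ZMod L) ≠ 0)
    (hconst : ∀ t : ZMod L, side C (t+1) = side C t) :
    ((L:ℕ) : ZMod (6*m)) * (pos C 1 - pos C 0) = 0 := by
  have hss : ∀ t, side C t = side C (t+1) := fun t => (hconst t).symm
  have hpair : ∀ t : ZMod L, pos C (t+1+1) - pos C (t+1) = pos C (t+1) - pos C t := by
    intro t
    have h2 : side C (t+1) = side C (t+2) := by
      rw [show t+2 = t+1+1 by ring]; exact hss (t+1)
    have := pair_eq C hinj hadj hL2 (hss t) h2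
    rw [show t+2 = t+1+1 by ring] at this; exact this
  have hcon := const_of_step (fun t => pos C (t+1) - pos C t) hpair
  have hcon' : ∀ t : ZMod L, pos C (t+1) - pos C t = pos C 1 - pos C 0 := by
    intro t; have := hcon t; simpa using this
  have key : ∀ j : ℕ, pos C ((j:ℕ) : ZMod L) - pos C 0
      = ((j:ℕ) : ZMod (6*m)) * (pos C 1 - pos C 0) := by
    intro j
    induction j with
    | zero => simp
    | succ n ih =>
        rw [show ((n+1 : ℕ) : ZMod L) = ((n : ℕ) : ZMod L) + 1 by push_cast; ring]
        push_cast
        linear_combination ih + hcon' ((n : ℕ) : ZMod L)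
  have := key L
  rw [ZMod.natCast_self] at this
  linear_combination -this


include hinj hadj in
lemma const_case
    (hA : ∀ c : ZMod (6*m), (c = 1 ∨ c = -1 ∨ c = K m ∨ c = -(K m)) →
      ((L:ℕ) : ZMod (6*m)) * c ≠ 0)
    (hL2 : (2 : ZMod L) ≠ 0)
    (hconst : ∀ t : ZMod L, side C (t+1) = side C t) : False := by
  have hsum := all_same_sum C hinj hadj hL2 hconst
  have hss : side C 0 = side C (0+1) := (hconst 0).symm
  rcases sameside_step C hadj hss with ⟨-, hd⟩ | ⟨-, hd⟩ <;>
    rcases hd with hd | hd <;> rw [zero_add] at hd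
  · exact hA 1 (Or.inl rfl)
      (by linear_combination hsum - ((L:ℕ) : ZMod (6*m)) * hd)
  · exact hA (-1) (Or.inr (Or.inl rfl))
      (by linear_combination hsum - ((L:ℕ) : ZMod (6*m)) * hd)
  · exact hA (K m) (Or.inr (Or.inr (Or.inl rfl)))
      (by linear_combination hsum - ((L:ℕ) : ZMod (6*m)) * hd)
  · exact hA (-(K m)) (Or.inr (Or.inr (Or.inr rfl)))
      (by linear_combination hsum - ((L:ℕ) : ZMod (6*m)) * hd)

end cyc

lemma hA_conc (m : ℕ) (hm2 : 2 ≤ m) (LL : ℕ) (h3 : 3 ≤ LL) (h6 : LL ≤ 6)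
    (hz1 : ∀ t : ℤ, -3 ≤ t → t ≤ 3 → (LL:ℤ) ≠ 6*(m:ℤ)*t)
    (hz2 : ∀ t : ℤ, -3 ≤ t → t ≤ 3 → (LL:ℤ)*(3*(m:ℤ)-1) ≠ 6*(m:ℤ)*t) :
    ∀ c : ZMod (6*m), (c = 1 ∨ c = -1 ∨ c = K m ∨ c = -(K m)) →
      ((LL:ℕ) : ZMod (6*m)) * c ≠ 0 := by
  have hc : ((LL:ℕ) : ZMod (6*m)) = (((LL:ℕ):ℤ) : ZMod (6*m)) := by push_cast; rfl
  intro c hc4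
  have hb1 : (-6:ℤ) ≤ LL ∧ (LL:ℤ) ≤ 6 := by constructor <;> omega
  have hb2 : (-6:ℤ) ≤ -(LL:ℤ) ∧ -(LL:ℤ) ≤ 6 := by constructor <;> omega
  rcases hc4 with rfl | rfl | rfl | rfl <;> intro h0
  · exact znz m hm2 (LL:ℤ) 0 hb1 (by norm_num)
      (by intro t ht1 ht2; exact fun hh => hz1 t ht1 ht2 (by linarith))
      (by push_cast; linear_combination h0)
  · exact znz m hm2 (-(LL:ℤ)) 0 hb2 (by norm_num)
      (by intro t ht1 ht2; exact fun hh => hz1 (-t) (by omega) (by omega) (by linarith))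
      (by push_cast; linear_combination h0)
  · exact znz m hm2 0 (LL:ℤ) (by norm_num) hb1
      (by intro t ht1 ht2; exact fun hh => hz2 t ht1 ht2 (by linarith))
      (by push_cast; linear_combination h0)
  · exact znz m hm2 0 (-(LL:ℤ)) (by norm_num) hb2
      (by intro t ht1 ht2; exact fun hh => hz2 (-t) (by omega) (by omega) (by linarith))
      (by push_cast; linear_combination h0)


lemma no3 (m : ℕ) (hm2 : 2 ≤ m) (C : ZMod 3 → ZMod (6*m) ⊕ ZMod (6*m))
    (hinj : Function.Injective C)
    (hadj : ∀ t, (GP (6*m) (3*m-1)).Adj (C t) (C (t+1))) : False := by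
  have hL2 : (2 : ZMod 3) ≠ 0 := by decide
  rcases comb3 (fun t => side C t) with ⟨t, h1, h2⟩ | hconst
  · exact adj_spokes C hinj hadj hL2 h1 h2
  · exact const_case C hinj hadj (hA_conc m hm2 3 (by norm_num) (by norm_num)
      (by intro t ht1 ht2; interval_cases t <;> omega)
      (by intro t ht1 ht2; interval_cases t <;> omega)) hL2 hconst

lemma no4 (m : ℕ) (hm2 : 2 ≤ m) (C : ZMod 4 → ZMod (6*m) ⊕ ZMod (6*m))
    (hinj : Function.Injective C)
    (hadj : ∀ t, (GP (6*m) (3*m-1)).Adj (C t) (C (t+1))) : False := by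
  have hL2 : (2 : ZMod 4) ≠ 0 := by decide
  rcases comb4 (fun t => side C t) with ⟨t, h1, h2⟩ | hconst | ⟨t, f1, e1, f2, e2⟩
  · exact adj_spokes C hinj hadj hL2 h1 h2
  · exact const_case C hinj hadj (hA_conc m hm2 4 (by norm_num) (by norm_num)
      (by intro t ht1 ht2; interval_cases t <;> omega)
      (by intro t ht1 ht2; interval_cases t <;> omega)) hL2 hconst
  · rw [show t+1+1 = t+2 by ring] at e1
    rw [show t+2+1 = t+3 by ring] at f2
    have e4 : t + 4 = t := by rw [show (4 : ZMod 4) = 0 from by decide, add_zero]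
    rw [show t+3+1 = t+4 by ring, e4] at e2
    have sp1 : pos C (t+1) = pos C t := spoke_pos C hadj (Ne.symm f1)
    have sp2 : pos C (t+3) = pos C (t+2) := by
      have := spoke_pos C hadj (t := t+2)
        (by rw [show t+2+1 = t+3 by ring]; exact Ne.symm f2)
      rwa [show t+2+1 = t+3 by ring] at this
    have sA := sameside_step C hadj (t := t+1)
      (by rw [show t+1+1 = t+2 by ring]; exact e1.symm)
    rw [show t+1+1 = t+2 by ring] at sA
    have sB := sameside_step C hadj (t := t+3)
      (by rw [show t+3+1 = t+4 by ring, e4]; exact e2.symm)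
    rw [show t+3+1 = t+4 by ring, e4] at sB
    have hAB : side C (t+3) ≠ side C (t+1) := by rw [← e1]; exact f2
    rcases sA with ⟨hbA, hdA⟩ | ⟨hbA, hdA⟩ <;> rcases sB with ⟨hbB, hdB⟩ | ⟨hbB, hdB⟩ <;>
      [(exact absurd (hbB.trans hbA.symm) hAB); skip; skip;
       (exact absurd (hbB.trans hbA.symm) hAB)] <;>
      rcases hdA with hdA | hdA <;> rcases hdB with hdB | hdB
    · exact znz m hm2 (-1) (-1) (by norm_num) (by norm_num)
        (by intro t' ht1 ht2; interval_cases t' <;> omega)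
        (by linear_combination sp1 + hdA + sp2 + hdB)
    · exact znz m hm2 (-1) 1 (by norm_num) (by norm_num)
        (by intro t' ht1 ht2; interval_cases t' <;> omega)
        (by linear_combination sp1 + hdA + sp2 + hdB)
    · exact znz m hm2 1 (-1) (by norm_num) (by norm_num)
        (by intro t' ht1 ht2; interval_cases t' <;> omega)
        (by linear_combination sp1 + hdA + sp2 + hdB)
    · exact znz m hm2 1 1 (by norm_num) (by norm_num)
        (by intro t' ht1 ht2; interval_cases t' <;> omega)
        (by linear_combination sp1 + hdA + sp2 + hdB)
    · exact znz m hm2 (-1) (-1) (by norm_num) (by norm_num)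
        (by intro t' ht1 ht2; interval_cases t' <;> omega)
        (by linear_combination sp1 + hdA + sp2 + hdB)
    · exact znz m hm2 1 (-1) (by norm_num) (by norm_num)
        (by intro t' ht1 ht2; interval_cases t' <;> omega)
        (by linear_combination sp1 + hdA + sp2 + hdB)
    · exact znz m hm2 (-1) 1 (by norm_num) (by norm_num)
        (by intro t' ht1 ht2; interval_cases t' <;> omega)
        (by linear_combination sp1 + hdA + sp2 + hdB)
    · exact znz m hm2 1 1 (by norm_num) (by norm_num)
        (by intro t' ht1 ht2; interval_cases t' <;> omega)
        (by linear_combination sp1 + hdA + sp2 + hdB)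

lemma no5 (m : ℕ) (hm2 : 2 ≤ m) (C : ZMod 5 → ZMod (6*m) ⊕ ZMod (6*m))
    (hinj : Function.Injective C)
    (hadj : ∀ t, (GP (6*m) (3*m-1)).Adj (C t) (C (t+1))) : False := by
  have hL2 : (2 : ZMod 5) ≠ 0 := by decide
  rcases comb5 (fun t => side C t) with ⟨t, h1, h2⟩ | hconst | ⟨t, f1, e1, f2, e2, e3⟩
  · exact adj_spokes C hinj hadj hL2 h1 h2
  · exact const_case C hinj hadj (hA_conc m hm2 5 (by norm_num) (by norm_num)
      (by intro t ht1 ht2; interval_cases t <;> omega)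
      (by intro t ht1 ht2; interval_cases t <;> omega)) hL2 hconst
  · rw [show t+1+1 = t+2 by ring] at e1
    rw [show t+2+1 = t+3 by ring] at f2
    rw [show t+3+1 = t+4 by ring] at e2
    have e5 : t + 5 = t := by rw [show (5 : ZMod 5) = 0 from by decide, add_zero]
    rw [show t+4+1 = t+5 by ring, e5] at e3
    have sp1 : pos C (t+1) = pos C t := spoke_pos C hadj (Ne.symm f1)
    have sp2 : pos C (t+3) = pos C (t+2) := by
      have := spoke_pos C hadj (t := t+2)
        (by rw [show t+2+1 = t+3 by ring]; exact Ne.symm f2)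
      rwa [show t+2+1 = t+3 by ring] at this
    have sA := sameside_step C hadj (t := t+1)
      (by rw [show t+1+1 = t+2 by ring]; exact e1.symm)
    rw [show t+1+1 = t+2 by ring] at sA
    have sB := sameside_step C hadj (t := t+3)
      (by rw [show t+3+1 = t+4 by ring]; exact e2.symm)
    rw [show t+3+1 = t+4 by ring] at sB
    have dB2 : pos C t - pos C (t+4) = pos C (t+4) - pos C (t+3) := by
      have := pair_eq C hinj hadj hL2 (t := t+3)
        (by rw [show t+3+1 = t+4 by ring]; exact e2.symm)
        (by rw [show t+3+1 = t+4 by ring, show t+3+2 = t+5 by ring, e5]; exact e3.symm)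
      rwa [show t+3+1 = t+4 by ring, show t+3+2 = t+5 by ring, e5] at this
    have hAB : side C (t+3) ≠ side C (t+1) := by rw [← e1]; exact f2
    rcases sA with ⟨hbA, hdA⟩ | ⟨hbA, hdA⟩ <;> rcases sB with ⟨hbB, hdB⟩ | ⟨hbB, hdB⟩ <;>
      [(exact absurd (hbB.trans hbA.symm) hAB); skip; skip;
       (exact absurd (hbB.trans hbA.symm) hAB)] <;>
      rcases hdA with hdA | hdA <;> rcases hdB with hdB | hdB
    · exact znz m hm2 (-1) (-2) (by norm_num) (by norm_num)
        (by intro t' ht1 ht2; interval_cases t' <;> omega)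
        (by linear_combination sp1 + hdA + sp2 + 2*hdB + dB2)
    · exact znz m hm2 (-1) 2 (by norm_num) (by norm_num)
        (by intro t' ht1 ht2; interval_cases t' <;> omega)
        (by linear_combination sp1 + hdA + sp2 + 2*hdB + dB2)
    · exact znz m hm2 1 (-2) (by norm_num) (by norm_num)
        (by intro t' ht1 ht2; interval_cases t' <;> omega)
        (by linear_combination sp1 + hdA + sp2 + 2*hdB + dB2)
    · exact znz m hm2 1 2 (by norm_num) (by norm_num)
        (by intro t' ht1 ht2; interval_cases t' <;> omega)
        (by linear_combination sp1 + hdA + sp2 + 2*hdB + dB2)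
    · exact znz m hm2 (-2) (-1) (by norm_num) (by norm_num)
        (by intro t' ht1 ht2; interval_cases t' <;> omega)
        (by linear_combination sp1 + hdA + sp2 + 2*hdB + dB2)
    · exact znz m hm2 2 (-1) (by norm_num) (by norm_num)
        (by intro t' ht1 ht2; interval_cases t' <;> omega)
        (by linear_combination sp1 + hdA + sp2 + 2*hdB + dB2)
    · exact znz m hm2 (-2) 1 (by norm_num) (by norm_num)
        (by intro t' ht1 ht2; interval_cases t' <;> omega)
        (by linear_combination sp1 + hdA + sp2 + 2*hdB + dB2)
    · exact znz m hm2 2 1 (by norm_num) (by norm_num)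
        (by intro t' ht1 ht2; interval_cases t' <;> omega)
        (by linear_combination sp1 + hdA + sp2 + 2*hdB + dB2)

def Ccyc (m : ℕ) (i : ZMod (6*m)) : ZMod 6 → ZMod (6*m) ⊕ ZMod (6*m) := fun j =>
  if j = 0 then .inl i else if j = 1 then .inl (i+1) else if j = 2 then .inl (i+2)
  else if j = 3 then .inr (i+2) else if j = 4 then .inr (i+2+K m) else .inr i

lemma Ccyc0 (m : ℕ) (i : ZMod (6*m)) : Ccyc m i 0 = .inl i := by
  rw [Ccyc, if_pos rfl]
lemma Ccyc1 (m : ℕ) (i : ZMod (6*m)) : Ccyc m i 1 = .inl (i+1) := by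
  rw [Ccyc, if_neg (by decide), if_pos rfl]
lemma Ccyc2 (m : ℕ) (i : ZMod (6*m)) : Ccyc m i 2 = .inl (i+2) := by
  rw [Ccyc, if_neg (by decide), if_neg (by decide), if_pos rfl]
lemma Ccyc3 (m : ℕ) (i : ZMod (6*m)) : Ccyc m i 3 = .inr (i+2) := by
  rw [Ccyc, if_neg (by decide), if_neg (by decide), if_neg (by decide), if_pos rfl]
lemma Ccyc4 (m : ℕ) (i : ZMod (6*m)) : Ccyc m i 4 = .inr (i+2+K m) := by
  rw [Ccyc, if_neg (by decide), if_neg (by decide), if_neg (by decide), if_neg (by decide),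
    if_pos rfl]
lemma Ccyc5 (m : ℕ) (i : ZMod (6*m)) : Ccyc m i 5 = .inr i := by
  rw [Ccyc, if_neg (by decide), if_neg (by decide), if_neg (by decide), if_neg (by decide),
    if_neg (by decide)]

def Sset (m : ℕ) (i : ZMod (6*m)) : Finset (Sym2 (ZMod (6*m) ⊕ ZMod (6*m))) :=
  Finset.image (fun j : ZMod 6 => s(Ccyc m i j, Ccyc m i (j+1))) Finset.univ

lemma zmod6cases : ∀ j : ZMod 6, j = 0 ∨ j = 1 ∨ j = 2 ∨ j = 3 ∨ j = 4 ∨ j = 5 := by decide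

section img

variable {m : ℕ} (C : ZMod 6 → ZMod (6*m) ⊕ ZMod (6*m))

lemma image_shift (t0 c : ZMod 6) (i : ZMod (6*m))
    (h : ∀ j : ZMod 6, C (t0 + j) = Ccyc m i (j + c)) :
    Finset.image (fun u : ZMod 6 => s(C u, C (u+1))) Finset.univ = Sset m i := by
  ext x
  simp only [Sset, Finset.mem_image, Finset.mem_univ, true_and]
  constructor
  · rintro ⟨u, rfl⟩
    refine ⟨u - t0 + c, ?_⟩
    have e1 := h (u - t0); have e2 := h (u - t0 + 1)
    rw [show t0 + (u - t0) = u by ring] at e1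
    rw [show t0 + (u - t0 + 1) = u + 1 by ring] at e2
    rw [show u - t0 + c + 1 = u - t0 + 1 + c by ring, ← e1, ← e2]
  · rintro ⟨j, rfl⟩
    refine ⟨t0 + (j - c), ?_⟩
    have e1 := h (j - c); have e2 := h (j - c + 1)
    rw [show j - c + c = j by ring] at e1
    rw [show j - c + 1 + c = j + 1 by ring] at e2
    rw [e1, show t0 + (j - c) + 1 = t0 + (j - c + 1) by ring, e2]

lemma image_rev (t0 c : ZMod 6) (i : ZMod (6*m))
    (h : ∀ j : ZMod 6, C (t0 + j) = Ccyc m i (c - j)) :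
    Finset.image (fun u : ZMod 6 => s(C u, C (u+1))) Finset.univ = Sset m i := by
  ext x
  simp only [Sset, Finset.mem_image, Finset.mem_univ, true_and]
  constructor
  · rintro ⟨u, rfl⟩
    refine ⟨c - (u - t0) - 1, ?_⟩
    have e1 := h (u - t0); have e2 := h (u - t0 + 1)
    rw [show t0 + (u - t0) = u by ring] at e1
    rw [show t0 + (u - t0 + 1) = u + 1 by ring] at e2
    rw [show c - (u - t0) - 1 + 1 = c - (u - t0) by ring,
      show c - (u - t0 + 1) = c - (u - t0) - 1 by ring] at *
    rw [← e1, ← e2, Sym2.eq_swap]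
  · rintro ⟨j, rfl⟩
    refine ⟨t0 + (c - j - 1), ?_⟩
    have e1 := h (c - j - 1); have e2 := h (c - j)
    rw [show c - (c - j - 1) = j + 1 by ring] at e1
    rw [show c - (c - j) = j by ring] at e2
    rw [e1, show t0 + (c - j - 1) + 1 = t0 + (c - j) by ring, e2, Sym2.eq_swap]

end img

lemma bfalse : ∀ a b : Bool, a ≠ b → b = true → a = false := by decide
lemma btrue : ∀ a b : Bool, a ≠ b → b = false → a = true := by decide

lemma classify6 (m : ℕ) (hm2 : 2 ≤ m) (hme : m % 2 = 0)
    (C : ZMod 6 → ZMod (6*m) ⊕ ZMod (6*m))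
    (hinj : Function.Injective C)
    (hadj : ∀ t, (GP (6*m) (3*m-1)).Adj (C t) (C (t+1))) :
    ∃ i, Finset.image (fun t : ZMod 6 => s(C t, C (t+1))) Finset.univ = Sset m i := by
  have hL2 : (2 : ZMod 6) ≠ 0 := by decide
  have hK2 := h2K m hm2 hme
  rcases comb6 (fun t => side C t) with ⟨t, h1, h2⟩ | hconst |
    ⟨t, f1, e1, f2, e2, e3, e4⟩ | ⟨t, f1, e1, e2, f3, e4, e5⟩
  · exact (adj_spokes C hinj hadj hL2 h1 h2).elim
  · exact (const_case C hinj hadj (hA_conc m hm2 6 (by norm_num) (by norm_num)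
      (by intro t ht1 ht2; interval_cases t <;> omega)
      (by intro t ht1 ht2; interval_cases t <;> omega)) hL2 hconst).elim
  · -- spokes at t and t+2 : segments of lengths 1 and 3, always impossible
    rw [show t+1+1 = t+2 by ring] at e1
    rw [show t+2+1 = t+3 by ring] at f2
    rw [show t+3+1 = t+4 by ring] at e2
    rw [show t+4+1 = t+5 by ring] at e3
    have e6 : t + 6 = t := by rw [show (6 : ZMod 6) = 0 from by decide, add_zero]
    rw [show t+5+1 = t+6 by ring, e6] at e4
    have sp1 : pos C (t+1) = pos C t := spoke_pos C hadj (Ne.symm f1)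
    have sp2 : pos C (t+3) = pos C (t+2) := by
      have := spoke_pos C hadj (t := t+2)
        (by rw [show t+2+1 = t+3 by ring]; exact Ne.symm f2)
      rwa [show t+2+1 = t+3 by ring] at this
    have sA := sameside_step C hadj (t := t+1)
      (by rw [show t+1+1 = t+2 by ring]; exact e1.symm)
    rw [show t+1+1 = t+2 by ring] at sA
    have sB := sameside_step C hadj (t := t+3)
      (by rw [show t+3+1 = t+4 by ring]; exact e2.symm)
    rw [show t+3+1 = t+4 by ring] at sB
    have dB2 : pos C (t+5) - pos C (t+4) = pos C (t+4) - pos C (t+3) := by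
      have := pair_eq C hinj hadj hL2 (t := t+3)
        (by rw [show t+3+1 = t+4 by ring]; exact e2.symm)
        (by rw [show t+3+1 = t+4 by ring, show t+3+2 = t+5 by ring]; exact e3.symm)
      rwa [show t+3+1 = t+4 by ring, show t+3+2 = t+5 by ring] at this
    have dB3 : pos C t - pos C (t+5) = pos C (t+5) - pos C (t+4) := by
      have := pair_eq C hinj hadj hL2 (t := t+4)
        (by rw [show t+4+1 = t+5 by ring]; exact e3.symm)
        (by rw [show t+4+1 = t+5 by ring, show t+4+2 = t+6 by ring, e6]; exact e4.symm)
      rwa [show t+4+1 = t+5 by ring, show t+4+2 = t+6 by ring, e6] at this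
    have hAB : side C (t+3) ≠ side C (t+1) := by rw [← e1]; exact f2
    exfalso
    rcases sA with ⟨hbA, hdA⟩ | ⟨hbA, hdA⟩ <;> rcases sB with ⟨hbB, hdB⟩ | ⟨hbB, hdB⟩ <;>
      [(exact absurd (hbB.trans hbA.symm) hAB); skip; skip;
       (exact absurd (hbB.trans hbA.symm) hAB)] <;>
      rcases hdA with hdA | hdA <;> rcases hdB with hdB | hdB
    · exact znz m hm2 (-1) (-3) (by norm_num) (by norm_num)
        (by intro t' ht1 ht2; interval_cases t' <;> omega)
        (by linear_combination sp1 + hdA + sp2 + 3*hdB + 2*dB2 + dB3)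
    · exact znz m hm2 (-1) 3 (by norm_num) (by norm_num)
        (by intro t' ht1 ht2; interval_cases t' <;> omega)
        (by linear_combination sp1 + hdA + sp2 + 3*hdB + 2*dB2 + dB3)
    · exact znz m hm2 1 (-3) (by norm_num) (by norm_num)
        (by intro t' ht1 ht2; interval_cases t' <;> omega)
        (by linear_combination sp1 + hdA + sp2 + 3*hdB + 2*dB2 + dB3)
    · exact znz m hm2 1 3 (by norm_num) (by norm_num)
        (by intro t' ht1 ht2; interval_cases t' <;> omega)
        (by linear_combination sp1 + hdA + sp2 + 3*hdB + 2*dB2 + dB3)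
    · exact znz m hm2 (-3) (-1) (by norm_num) (by norm_num)
        (by intro t' ht1 ht2; interval_cases t' <;> omega)
        (by linear_combination sp1 + hdA + sp2 + 3*hdB + 2*dB2 + dB3)
    · exact znz m hm2 3 (-1) (by norm_num) (by norm_num)
        (by intro t' ht1 ht2; interval_cases t' <;> omega)
        (by linear_combination sp1 + hdA + sp2 + 3*hdB + 2*dB2 + dB3)
    · exact znz m hm2 (-3) 1 (by norm_num) (by norm_num)
        (by intro t' ht1 ht2; interval_cases t' <;> omega)
        (by linear_combination sp1 + hdA + sp2 + 3*hdB + 2*dB2 + dB3)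
    · exact znz m hm2 3 1 (by norm_num) (by norm_num)
        (by intro t' ht1 ht2; interval_cases t' <;> omega)
        (by linear_combination sp1 + hdA + sp2 + 3*hdB + 2*dB2 + dB3)
  · -- spokes at t and t+3 : two segments of length 2, the genuine 6-cycles
    rw [show t+1+1 = t+2 by ring] at e1
    rw [show t+2+1 = t+3 by ring] at e2
    rw [show t+3+1 = t+4 by ring] at f3
    rw [show t+4+1 = t+5 by ring] at e4
    have e6 : t + 6 = t := by rw [show (6 : ZMod 6) = 0 from by decide, add_zero]
    rw [show t+5+1 = t+6 by ring, e6] at e5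
    have sp1 : pos C (t+1) = pos C t := spoke_pos C hadj (Ne.symm f1)
    have sp2 : pos C (t+4) = pos C (t+3) := by
      have := spoke_pos C hadj (t := t+3)
        (by rw [show t+3+1 = t+4 by ring]; exact Ne.symm f3)
      rwa [show t+3+1 = t+4 by ring] at this
    have sA := sameside_step C hadj (t := t+1)
      (by rw [show t+1+1 = t+2 by ring]; exact e1.symm)
    rw [show t+1+1 = t+2 by ring] at sA
    have dA2 : pos C (t+3) - pos C (t+2) = pos C (t+2) - pos C (t+1) := by
      have := pair_eq C hinj hadj hL2 (t := t+1)
        (by rw [show t+1+1 = t+2 by ring]; exact e1.symm)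
        (by rw [show t+1+1 = t+2 by ring, show t+1+2 = t+3 by ring]; exact e2.symm)
      rwa [show t+1+1 = t+2 by ring, show t+1+2 = t+3 by ring] at this
    have sB := sameside_step C hadj (t := t+4)
      (by rw [show t+4+1 = t+5 by ring]; exact e4.symm)
    rw [show t+4+1 = t+5 by ring] at sB
    have dB2 : pos C t - pos C (t+5) = pos C (t+5) - pos C (t+4) := by
      have := pair_eq C hinj hadj hL2 (t := t+4)
        (by rw [show t+4+1 = t+5 by ring]; exact e4.symm)
        (by rw [show t+4+1 = t+5 by ring, show t+4+2 = t+6 by ring, e6]; exact e5.symm)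
      rwa [show t+4+1 = t+5 by ring, show t+4+2 = t+6 by ring, e6] at this
    have hAB : side C (t+4) ≠ side C (t+1) := by rw [e2, e1] at f3; exact f3
    rcases sA with ⟨hbA, hdA⟩ | ⟨hbA, hdA⟩ <;> rcases sB with ⟨hbB, hdB⟩ | ⟨hbB, hdB⟩ <;>
      [(exact absurd (hbB.trans hbA.symm) hAB); skip; skip;
       (exact absurd (hbB.trans hbA.symm) hAB)] <;>
      rcases hdA with hdA | hdA <;> rcases hdB with hdB | hdB
    -- A outer (+1), B inner (+K) : good, i = pos C (t+1)
    · have hb2 : side C (t+2) = true := e1.trans hbA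
      have hb3 : side C (t+3) = true := e2.trans hb2
      have hb5 : side C (t+5) = false := e4.trans hbB
      have hbt : side C t = false := e5.trans hb5
      have q0 : pos C t = pos C (t+1) := sp1.symm
      have q3 : pos C (t+3) = pos C (t+1) + 2 := by linear_combination dA2 + 2*hdA
      have q4 : pos C (t+4) = pos C (t+1) + 2 := by linear_combination sp2 + dA2 + 2*hdA
      have q5 : pos C (t+5) = pos C (t+1) + 2 + K m := by
        linear_combination hdB + sp2 + dA2 + 2*hdA
      refine ⟨pos C (t+1), image_shift C (t+1) 0 _ ?_⟩
      intro j
      rcases zmod6cases j with rfl | rfl | rfl | rfl | rfl | rfl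
      · rw [show t+1+(0:ZMod 6) = t+1 by ring, show (0:ZMod 6)+0 = 0 from by decide, Ccyc0]
        exact C_inl C _ hbA
      · rw [show t+1+(1:ZMod 6) = t+2 by ring, show (1:ZMod 6)+0 = 1 from by decide, Ccyc1]
        rw [C_inl C _ hb2, hdA]
      · rw [show t+1+(2:ZMod 6) = t+3 by ring, show (2:ZMod 6)+0 = 2 from by decide, Ccyc2]
        rw [C_inl C _ hb3, q3]
      · rw [show t+1+(3:ZMod 6) = t+4 by ring, show (3:ZMod 6)+0 = 3 from by decide, Ccyc3]
        rw [C_inr C _ hbB, q4]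
      · rw [show t+1+(4:ZMod 6) = t+5 by ring, show (4:ZMod 6)+0 = 4 from by decide, Ccyc4]
        rw [C_inr C _ hb5, q5]
      · rw [show t+1+(5:ZMod 6) = t+6 by ring, e6,
          show (5:ZMod 6)+0 = 5 from by decide, Ccyc5]
        rw [C_inr C _ hbt, q0]
    · exact absurd (by linear_combination sp1 + 2*hdA + dA2 + sp2 + 2*hdB + dB2)
        (znz m hm2 (-2) 2 (by norm_num) (by norm_num)
          (by intro t' ht1 ht2; interval_cases t' <;> omega))
    · exact absurd (by linear_combination sp1 + 2*hdA + dA2 + sp2 + 2*hdB + dB2)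
        (znz m hm2 2 (-2) (by norm_num) (by norm_num)
          (by intro t' ht1 ht2; interval_cases t' <;> omega))
    -- A outer (-1), B inner (-K) : good, reversed, i = pos C (t+1) - 2
    · have hb2 : side C (t+2) = true := e1.trans hbA
      have hb3 : side C (t+3) = true := e2.trans hb2
      have hb5 : side C (t+5) = false := e4.trans hbB
      have hbt : side C t = false := e5.trans hb5
      have q0 : pos C t = pos C (t+1) := sp1.symm
      have q2 : pos C (t+2) = (pos C (t+1) - 2) + 1 := by linear_combination hdA
      have q3 : pos C (t+3) = pos C (t+1) - 2 := by linear_combination dA2 + 2*hdA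
      have q4 : pos C (t+4) = pos C (t+1) - 2 := by linear_combination sp2 + dA2 + 2*hdA
      have q5 : pos C (t+5) = (pos C (t+1) - 2) + 2 + K m := by
        linear_combination hdB + sp2 + dA2 + 2*hdA - hK2
      refine ⟨pos C (t+1) - 2, image_rev C (t+1) 2 _ ?_⟩
      intro j
      rcases zmod6cases j with rfl | rfl | rfl | rfl | rfl | rfl
      · rw [show t+1+(0:ZMod 6) = t+1 by ring, show (2:ZMod 6)-0 = 2 from by decide, Ccyc2]
        rw [C_inl C _ hbA]; rw [show pos C (t+1) - 2 + 2 = pos C (t+1) by ring]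
      · rw [show t+1+(1:ZMod 6) = t+2 by ring, show (2:ZMod 6)-1 = 1 from by decide, Ccyc1]
        rw [C_inl C _ hb2, q2]
      · rw [show t+1+(2:ZMod 6) = t+3 by ring, show (2:ZMod 6)-2 = 0 from by decide, Ccyc0]
        rw [C_inl C _ hb3, q3]
      · rw [show t+1+(3:ZMod 6) = t+4 by ring, show (2:ZMod 6)-3 = 5 from by decide, Ccyc5]
        rw [C_inr C _ hbB, q4]
      · rw [show t+1+(4:ZMod 6) = t+5 by ring, show (2:ZMod 6)-4 = 4 from by decide, Ccyc4]
        rw [C_inr C _ hb5, q5]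
      · rw [show t+1+(5:ZMod 6) = t+6 by ring, e6,
          show (2:ZMod 6)-5 = 3 from by decide, Ccyc3]
        rw [C_inr C _ hbt, q0]; rw [show pos C (t+1) - 2 + 2 = pos C (t+1) by ring]
    -- A inner (+K), B outer (+1) : good, shifted by 3, i = pos C (t+1) - 2
    · have hb2 : side C (t+2) = false := e1.trans hbA
      have hb3 : side C (t+3) = false := e2.trans hb2
      have hb5 : side C (t+5) = true := e4.trans hbB
      have hbt : side C t = true := e5.trans hb5
      have q0 : pos C t = pos C (t+1) := sp1.symm
      have q2 : pos C (t+2) = (pos C (t+1) - 2) + 2 + K m := by linear_combination hdA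
      have q3 : pos C (t+3) = pos C (t+1) - 2 := by linear_combination dA2 + 2*hdA + hK2
      have q4 : pos C (t+4) = pos C (t+1) - 2 := by
        linear_combination sp2 + dA2 + 2*hdA + hK2
      have q5 : pos C (t+5) = (pos C (t+1) - 2) + 1 := by
        linear_combination hdB + sp2 + dA2 + 2*hdA + hK2
      refine ⟨pos C (t+1) - 2, image_shift C (t+1) 3 _ ?_⟩
      intro j
      rcases zmod6cases j with rfl | rfl | rfl | rfl | rfl | rfl
      · rw [show t+1+(0:ZMod 6) = t+1 by ring, show (0:ZMod 6)+3 = 3 from by decide, Ccyc3]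
        rw [C_inr C _ hbA]; rw [show pos C (t+1) - 2 + 2 = pos C (t+1) by ring]
      · rw [show t+1+(1:ZMod 6) = t+2 by ring, show (1:ZMod 6)+3 = 4 from by decide, Ccyc4]
        rw [C_inr C _ hb2, q2]
      · rw [show t+1+(2:ZMod 6) = t+3 by ring, show (2:ZMod 6)+3 = 5 from by decide, Ccyc5]
        rw [C_inr C _ hb3, q3]
      · rw [show t+1+(3:ZMod 6) = t+4 by ring, show (3:ZMod 6)+3 = 0 from by decide, Ccyc0]
        rw [C_inl C _ hbB, q4]
      · rw [show t+1+(4:ZMod 6) = t+5 by ring, show (4:ZMod 6)+3 = 1 from by decide, Ccyc1]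
        rw [C_inl C _ hb5, q5]
      · rw [show t+1+(5:ZMod 6) = t+6 by ring, e6,
          show (5:ZMod 6)+3 = 2 from by decide, Ccyc2]
        rw [C_inl C _ hbt, q0]; rw [show pos C (t+1) - 2 + 2 = pos C (t+1) by ring]
    · exact absurd (by linear_combination sp1 + 2*hdA + dA2 + sp2 + 2*hdB + dB2)
        (znz m hm2 2 (-2) (by norm_num) (by norm_num)
          (by intro t' ht1 ht2; interval_cases t' <;> omega))
    · exact absurd (by linear_combination sp1 + 2*hdA + dA2 + sp2 + 2*hdB + dB2)
        (znz m hm2 (-2) 2 (by norm_num) (by norm_num)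
          (by intro t' ht1 ht2; interval_cases t' <;> omega))
    -- A inner (-K), B outer (-1) : good, reversed, i = pos C (t+1)
    · have hb2 : side C (t+2) = false := e1.trans hbA
      have hb3 : side C (t+3) = false := e2.trans hb2
      have hb5 : side C (t+5) = true := e4.trans hbB
      have hbt : side C t = true := e5.trans hb5
      have q0 : pos C t = pos C (t+1) := sp1.symm
      have q2 : pos C (t+2) = pos C (t+1) + 2 + K m := by linear_combination hdA - hK2
      have q3 : pos C (t+3) = pos C (t+1) + 2 := by linear_combination dA2 + 2*hdA - hK2
      have q4 : pos C (t+4) = pos C (t+1) + 2 := by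
        linear_combination sp2 + dA2 + 2*hdA - hK2
      have q5 : pos C (t+5) = pos C (t+1) + 1 := by
        linear_combination hdB + sp2 + dA2 + 2*hdA - hK2
      refine ⟨pos C (t+1), image_rev C (t+1) 5 _ ?_⟩
      intro j
      rcases zmod6cases j with rfl | rfl | rfl | rfl | rfl | rfl
      · rw [show t+1+(0:ZMod 6) = t+1 by ring, show (5:ZMod 6)-0 = 5 from by decide, Ccyc5]
        exact C_inr C _ hbA
      · rw [show t+1+(1:ZMod 6) = t+2 by ring, show (5:ZMod 6)-1 = 4 from by decide, Ccyc4]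
        rw [C_inr C _ hb2, q2]
      · rw [show t+1+(2:ZMod 6) = t+3 by ring, show (5:ZMod 6)-2 = 3 from by decide, Ccyc3]
        rw [C_inr C _ hb3, q3]
      · rw [show t+1+(3:ZMod 6) = t+4 by ring, show (5:ZMod 6)-3 = 2 from by decide, Ccyc2]
        rw [C_inl C _ hbB, q4]
      · rw [show t+1+(4:ZMod 6) = t+5 by ring, show (5:ZMod 6)-4 = 1 from by decide, Ccyc1]
        rw [C_inl C _ hb5, q5]
      · rw [show t+1+(5:ZMod 6) = t+6 by ring, e6,
          show (5:ZMod 6)-5 = 0 from by decide, Ccyc0]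
        rw [C_inl C _ hbt, q0]

section walkext

variable {V : Type*} {G : SimpleGraph V}

lemma getVert_eq_support_getElem {u v : V} (w : G.Walk u v) (i : ℕ) (hi : i ≤ w.length) :
    w.getVert i = w.support[i]'(by rw [Walk.length_support]; omega) := by
  induction w generalizing i with
  | nil =>
      have : i = 0 := by simpa using hi
      subst this; simp
  | cons h p ih =>
      cases i with
      | zero => simp
      | succ n =>
          have hn : n ≤ p.length := by simpa using hi
          simpa [Walk.getVert_cons_succ] using ih n hn

lemma cycle_getVert_inj {a : V} {w : G.Walk a a} (hw : w.IsCycle) {i j : ℕ}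
    (hi : i < w.length) (hj : j < w.length) (h : w.getVert i = w.getVert j) : i = j := by
  have h3 := hw.three_le_length
  have hnd := hw.support_nodup
  have hlen : w.support.tail.length = w.length := by
    have := Walk.length_support w
    have h2 := w.support_eq_cons
    rw [h2] at this
    simpa using this
  -- index into the tail : for 1 ≤ i ≤ length, getVert i = tail[i-1]
  have key : ∀ k : ℕ, (hk1 : 1 ≤ k) → (hk2 : k ≤ w.length) →
      w.getVert k = w.support.tail[k-1]'(by omega) := by
    intro k hk1 hk2
    have e := getVert_eq_support_getElem w k hk2
    rw [e]
    have h2 := w.support_eq_cons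
    obtain ⟨k', rfl⟩ : ∃ k', k = k' + 1 := ⟨k - 1, by omega⟩
    have e2 := List.getElem_of_eq h2
      (show k'+1 < w.support.length from by rw [Walk.length_support]; omega)
    rw [e2]
    simp
  set i' := if i = 0 then w.length else i with hi'
  set j' := if j = 0 then w.length else j with hj'
  have hgi : w.getVert i' = w.getVert i := by
    rw [hi']; split
    · rename_i h0; rw [h0, Walk.getVert_zero, Walk.getVert_length]
    · rfl
  have hgj : w.getVert j' = w.getVert j := by
    rw [hj']; split
    · rename_i h0; rw [h0, Walk.getVert_zero, Walk.getVert_length]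
    · rfl
  have hi1 : 1 ≤ i' ∧ i' ≤ w.length := by rw [hi']; split <;> omega
  have hj1 : 1 ≤ j' ∧ j' ≤ w.length := by rw [hj']; split <;> omega
  have : w.support.tail[i'-1]'(by omega) = w.support.tail[j'-1]'(by omega) := by
    rw [← key i' hi1.1 hi1.2, ← key j' hj1.1 hj1.2, hgi, hgj, h]
  have := (hnd.getElem_inj_iff).mp this
  rw [hi', hj'] at this
  revert this
  split <;> split <;> omega

lemma cyc_fun {a : V} (w : G.Walk a a) (hw : w.IsCycle) (L : ℕ) [NeZero L]
    (hL : w.length = L) (hval1 : (1 : ZMod L).val = 1) :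
    ∃ C : ZMod L → V, Function.Injective C ∧ ∀ t, G.Adj (C t) (C (t+1)) := by
  refine ⟨fun t => w.getVert t.val, ?_, ?_⟩
  · intro t1 t2 h
    have := cycle_getVert_inj hw (i := t1.val) (j := t2.val)
      (by rw [hL]; exact ZMod.val_lt t1) (by rw [hL]; exact ZMod.val_lt t2) h
    exact ZMod.val_injective L this
  · intro t
    have hv : t.val < L := ZMod.val_lt t
    have hL1 : 1 ≤ L := Nat.one_le_iff_ne_zero.mpr (NeZero.ne L)
    by_cases hc : t.val + 1 < L
    · have hvadd : (t+1).val = t.val + 1 := by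
        rw [ZMod.val_add, hval1]; exact Nat.mod_eq_of_lt hc
      show G.Adj (w.getVert t.val) (w.getVert (t+1).val)
      rw [hvadd]
      exact w.adj_getVert_succ (by omega)
    · have hteq : t.val = L - 1 := by omega
      have hvadd : (t+1).val = 0 := by
        rw [ZMod.val_add, hval1, hteq, show L - 1 + 1 = L from by omega, Nat.mod_self]
      show G.Adj (w.getVert t.val) (w.getVert (t+1).val)
      have hadj' := w.adj_getVert_succ (i := w.length - 1) (by omega)
      rw [show w.length - 1 + 1 = w.length by omega, Walk.getVert_length] at hadj'
      rw [hvadd, Walk.getVert_zero, hteq, ← hL]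
      exact hadj'

end walkext

section ccyc

variable (m : ℕ) (hm2 : 2 ≤ m) (hme : m % 2 = 0)

include hm2 in
lemma nz1 : (1 : ZMod (6*m)) ≠ 0 := by
  intro h
  exact znz m hm2 1 0 (by norm_num) (by norm_num)
    (by intro t h1 h2; interval_cases t <;> omega) (by linear_combination h)

include hm2 in
lemma nz2 : (2 : ZMod (6*m)) ≠ 0 := by
  intro h
  exact znz m hm2 2 0 (by norm_num) (by norm_num)
    (by intro t h1 h2; interval_cases t <;> omega) (by linear_combination h)

include hm2 in
lemma nzK : K m ≠ 0 := by
  intro h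
  exact znz m hm2 0 1 (by norm_num) (by norm_num)
    (by intro t h1 h2; interval_cases t <;> omega) (by linear_combination h)

include hm2 in
lemma nzK1 : K m + 1 ≠ 0 := by
  intro h
  exact znz m hm2 1 1 (by norm_num) (by norm_num)
    (by intro t h1 h2; interval_cases t <;> omega) (by linear_combination h)

include hm2 in
lemma nzK2 : K m + 2 ≠ 0 := by
  intro h
  exact znz m hm2 2 1 (by norm_num) (by norm_num)
    (by intro t h1 h2; interval_cases t <;> omega) (by linear_combination h)

include hm2 hme in
lemma Ccyc_adj (i : ZMod (6*m)) :
    ∀ j : ZMod 6, (GP (6*m) (3*m-1)).Adj (Ccyc m i j) (Ccyc m i (j+1)) := by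
  have hK2 := h2K m hm2 hme
  have e1 := nz1 m hm2
  have e2 := nz2 m hm2
  have eK := nzK m hm2
  have eK2 := nzK2 m hm2
  intro j
  rcases zmod6cases j with rfl | rfl | rfl | rfl | rfl | rfl
  · rw [Ccyc0, show (0:ZMod 6)+1 = 1 from by decide, Ccyc1]
    exact ⟨by simp only [ne_eq, Sum.inl.injEq]; intro h; exact e1 (by linear_combination -h),
      Or.inl rfl⟩
  · rw [Ccyc1, show (1:ZMod 6)+1 = 2 from by decide, Ccyc2]
    exact ⟨by simp only [ne_eq, Sum.inl.injEq]; intro h; exact e1 (by linear_combination -h),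
      Or.inl (by ring)⟩
  · rw [Ccyc2, show (2:ZMod 6)+1 = 3 from by decide, Ccyc3]
    exact ⟨by simp, rfl⟩
  · rw [Ccyc3, show (3:ZMod 6)+1 = 4 from by decide, Ccyc4]
    refine ⟨by simp only [ne_eq, Sum.inr.injEq]; intro h; exact eK (by linear_combination -h),
      Or.inl ?_⟩
    show i + 2 + K m = i + 2 + K m
    rfl
  · rw [Ccyc4, show (4:ZMod 6)+1 = 5 from by decide, Ccyc5]
    refine ⟨by simp only [ne_eq, Sum.inr.injEq]; intro h; exact eK2 (by linear_combination h),
      Or.inl ?_⟩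
    show i = i + 2 + K m + K m
    linear_combination -hK2
  · rw [Ccyc5, show (5:ZMod 6)+1 = 0 from by decide, Ccyc0]
    exact ⟨by simp, rfl⟩

include hm2 in
lemma Ccyc_inj (i : ZMod (6*m)) : Function.Injective (Ccyc m i) := by
  have e1 := nz1 m hm2
  have e2 := nz2 m hm2
  have eK := nzK m hm2
  have eK2 := nzK2 m hm2
  intro j1 j2 h
  rcases zmod6cases j1 with rfl | rfl | rfl | rfl | rfl | rfl <;>
    rcases zmod6cases j2 with rfl | rfl | rfl | rfl | rfl | rfl <;>
    simp only [Ccyc0, Ccyc1, Ccyc2, Ccyc3, Ccyc4, Ccyc5, Sum.inl.injEq, Sum.inr.injEq,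
      reduceCtorEq] at h <;>
    first
      | rfl
      | (exact absurd (show (1 : ZMod (6*m)) = 0 by linear_combination h) e1)
      | (exact absurd (show (1 : ZMod (6*m)) = 0 by linear_combination -h) e1)
      | (exact absurd (show (2 : ZMod (6*m)) = 0 by linear_combination h) e2)
      | (exact absurd (show (2 : ZMod (6*m)) = 0 by linear_combination -h) e2)
      | (exact absurd (show K m = 0 by linear_combination h) eK)
      | (exact absurd (show K m = 0 by linear_combination -h) eK)
      | (exact absurd (show K m + 2 = 0 by linear_combination h) eK2)
      | (exact absurd (show K m + 2 = 0 by linear_combination -h) eK2)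

end ccyc

section mem

variable (m : ℕ) (hm2 : 2 ≤ m) (hme : m % 2 = 0)

lemma mem_out1 (a : ZMod (6*m)) : s(Sum.inl a, Sum.inl (a+1)) ∈ Sset m a := by
  refine Finset.mem_image.mpr ⟨0, Finset.mem_univ _, ?_⟩
  rw [Ccyc0, show (0:ZMod 6)+1 = 1 from by decide, Ccyc1]

lemma mem_out2 (a : ZMod (6*m)) : s(Sum.inl a, Sum.inl (a+1)) ∈ Sset m (a-1) := by
  refine Finset.mem_image.mpr ⟨1, Finset.mem_univ _, ?_⟩
  rw [Ccyc1, show (1:ZMod 6)+1 = 2 from by decide, Ccyc2,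
    show a - 1 + 1 = a by ring, show a - 1 + 2 = a + 1 by ring]

lemma mem_spoke1 (a : ZMod (6*m)) : s(Sum.inl a, Sum.inr a) ∈ Sset m a := by
  refine Finset.mem_image.mpr ⟨5, Finset.mem_univ _, ?_⟩
  rw [Ccyc5, show (5:ZMod 6)+1 = 0 from by decide, Ccyc0, Sym2.eq_swap]

lemma mem_spoke2 (a : ZMod (6*m)) : s(Sum.inl a, Sum.inr a) ∈ Sset m (a-2) := by
  refine Finset.mem_image.mpr ⟨2, Finset.mem_univ _, ?_⟩
  rw [Ccyc2, show (2:ZMod 6)+1 = 3 from by decide, Ccyc3, show a - 2 + 2 = a by ring]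

lemma mem_inn1 (a : ZMod (6*m)) : s(Sum.inr a, Sum.inr (a + K m)) ∈ Sset m (a-2) := by
  refine Finset.mem_image.mpr ⟨3, Finset.mem_univ _, ?_⟩
  rw [Ccyc3, show (3:ZMod 6)+1 = 4 from by decide, Ccyc4, show a - 2 + 2 = a by ring]

include hm2 hme in
lemma mem_inn2 (a : ZMod (6*m)) : s(Sum.inr a, Sum.inr (a + K m)) ∈ Sset m (a + K m) := by
  have hK2 := h2K m hm2 hme
  refine Finset.mem_image.mpr ⟨4, Finset.mem_univ _, ?_⟩
  rw [Ccyc4, show (4:ZMod 6)+1 = 5 from by decide, Ccyc5,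
    show a + K m + 2 + K m = a by linear_combination hK2, Sym2.eq_swap]

include hm2 in
lemma char_out (a i : ZMod (6*m)) (h : s(Sum.inl a, Sum.inl (a+1)) ∈ Sset m i) :
    i = a ∨ i = a - 1 := by
  have e2 := nz2 m hm2
  obtain ⟨j, -, hj⟩ := Finset.mem_image.mp h
  rcases zmod6cases j with rfl | rfl | rfl | rfl | rfl | rfl
  all_goals simp only [Ccyc0, Ccyc1, Ccyc2, Ccyc3, Ccyc4, Ccyc5,
    show ((0:ZMod 6)+1 : ZMod 6) = 1 from by decide,
    show ((1:ZMod 6)+1 : ZMod 6) = 2 from by decide,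
    show ((2:ZMod 6)+1 : ZMod 6) = 3 from by decide,
    show ((3:ZMod 6)+1 : ZMod 6) = 4 from by decide,
    show ((4:ZMod 6)+1 : ZMod 6) = 5 from by decide,
    show ((5:ZMod 6)+1 : ZMod 6) = 0 from by decide,
    Sym2.eq_iff, Sum.inl.injEq, Sum.inr.injEq, reduceCtorEq, false_and, and_false,
    or_false, false_or] at hj
  · rcases hj with ⟨h1, -⟩ | ⟨h1, h2⟩
    · exact Or.inl h1
    · exact absurd (show (2 : ZMod (6*m)) = 0 by linear_combination h2 - h1) e2
  · rcases hj with ⟨h1, -⟩ | ⟨h1, h2⟩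
    · exact Or.inr (by linear_combination h1)
    · exact absurd (show (2 : ZMod (6*m)) = 0 by linear_combination h2 - h1) e2

include hm2 in
lemma char_spoke (a i : ZMod (6*m)) (h : s(Sum.inl a, Sum.inr a) ∈ Sset m i) :
    i = a ∨ i = a - 2 := by
  obtain ⟨j, -, hj⟩ := Finset.mem_image.mp h
  rcases zmod6cases j with rfl | rfl | rfl | rfl | rfl | rfl
  all_goals simp only [Ccyc0, Ccyc1, Ccyc2, Ccyc3, Ccyc4, Ccyc5,
    show ((0:ZMod 6)+1 : ZMod 6) = 1 from by decide,
    show ((1:ZMod 6)+1 : ZMod 6) = 2 from by decide,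
    show ((2:ZMod 6)+1 : ZMod 6) = 3 from by decide,
    show ((3:ZMod 6)+1 : ZMod 6) = 4 from by decide,
    show ((4:ZMod 6)+1 : ZMod 6) = 5 from by decide,
    show ((5:ZMod 6)+1 : ZMod 6) = 0 from by decide,
    Sym2.eq_iff, Sum.inl.injEq, Sum.inr.injEq, reduceCtorEq, false_and, and_false,
    or_false, false_or] at hj
  · exact Or.inr (by linear_combination hj.1)
  · exact Or.inl hj.1

include hm2 hme in
lemma char_inn (a i : ZMod (6*m)) (h : s(Sum.inr a, Sum.inr (a + K m)) ∈ Sset m i) :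
    i = a - 2 ∨ i = a + K m := by
  have hK2 := h2K m hm2 hme
  have e2 := nz2 m hm2
  obtain ⟨j, -, hj⟩ := Finset.mem_image.mp h
  rcases zmod6cases j with rfl | rfl | rfl | rfl | rfl | rfl
  all_goals simp only [Ccyc0, Ccyc1, Ccyc2, Ccyc3, Ccyc4, Ccyc5,
    show ((0:ZMod 6)+1 : ZMod 6) = 1 from by decide,
    show ((1:ZMod 6)+1 : ZMod 6) = 2 from by decide,
    show ((2:ZMod 6)+1 : ZMod 6) = 3 from by decide,
    show ((3:ZMod 6)+1 : ZMod 6) = 4 from by decide,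
    show ((4:ZMod 6)+1 : ZMod 6) = 5 from by decide,
    show ((5:ZMod 6)+1 : ZMod 6) = 0 from by decide,
    Sym2.eq_iff, Sum.inl.injEq, Sum.inr.injEq, reduceCtorEq, false_and, and_false,
    or_false, false_or] at hj
  · rcases hj with ⟨h1, -⟩ | ⟨h1, h2⟩
    · exact Or.inl (by linear_combination h1)
    · exact absurd (show (2 : ZMod (6*m)) = 0 by linear_combination hK2 - h2 + h1) e2
  · rcases hj with ⟨h1, h2⟩ | ⟨h1, h2⟩
    · exact Or.inr h2
    · exact absurd (show (2 : ZMod (6*m)) = 0 by linear_combination h1 - h2) e2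

include hm2 in
lemma Sset_inj (i i' : ZMod (6*m)) (h : Sset m i = Sset m i') : i = i' := by
  have e1 := nz1 m hm2
  have h1 := char_out m hm2 i i' (h ▸ mem_out1 m i)
  have h2 := char_spoke m hm2 i i' (h ▸ mem_spoke1 m i)
  rcases h1 with h1 | h1
  · exact h1.symm
  · rcases h2 with h2 | h2
    · exact h2.symm
    · exact absurd (show (1 : ZMod (6*m)) = 0 by linear_combination h2 - h1) e1

end mem

lemma img_eq {α β : Type*} (i1 i2 : DecidableEq β) (f : α → β) (s : Finset α) :
    @Finset.image α β i1 f s = @Finset.image α β i2 f s := by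
  have : i1 = i2 := by
    apply Subsingleton.elim (h := ?_)
    exact ⟨fun a b => funext fun x => funext fun y => Subsingleton.elim _ _⟩
  rw [this]

section girth

variable (m : ℕ) (hm2 : 2 ≤ m) (hme : m % 2 = 0)

include hm2 hme in
lemma egirth_le : (GP (6*m) (3*m-1)).egirth ≤ 6 := by
  have hK2 := h2K m hm2 hme
  have e1 := nz1 m hm2
  have e2 := nz2 m hm2
  have eK := nzK m hm2
  have eK2 := nzK2 m hm2
  have f01 : (Sum.inl (0 : ZMod (6*m)) : ZMod (6*m) ⊕ ZMod (6*m)) ≠ Sum.inl 1 := by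
    simp only [ne_eq, Sum.inl.injEq]
    intro h; exact e1 (by linear_combination -h)
  have f12 : (Sum.inl (1 : ZMod (6*m)) : ZMod (6*m) ⊕ ZMod (6*m)) ≠ Sum.inl 2 := by
    simp only [ne_eq, Sum.inl.injEq]
    intro h; exact e1 (by linear_combination -h)
  have f34 : (Sum.inr (2 : ZMod (6*m)) : ZMod (6*m) ⊕ ZMod (6*m)) ≠ Sum.inr (2 + K m) := by
    simp only [ne_eq, Sum.inr.injEq]
    intro h; exact eK (by linear_combination -h)
  have f45 : (Sum.inr (2 + K m : ZMod (6*m)) : ZMod (6*m) ⊕ ZMod (6*m)) ≠ Sum.inr 0 := by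
    simp only [ne_eq, Sum.inr.injEq]
    intro h; exact eK2 (by linear_combination h)
  have a01 : (GP (6*m) (3*m-1)).Adj (Sum.inl 0) (Sum.inl 1) := ⟨f01, Or.inl (by ring)⟩
  have a12 : (GP (6*m) (3*m-1)).Adj (Sum.inl 1) (Sum.inl 2) := ⟨f12, Or.inl (by ring)⟩
  have a23 : (GP (6*m) (3*m-1)).Adj (Sum.inl 2) (Sum.inr 2) := ⟨by simp, rfl⟩
  have a34 : (GP (6*m) (3*m-1)).Adj (Sum.inr 2) (Sum.inr (2 + K m)) := by
    refine ⟨f34, Or.inl ?_⟩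
    show (2 : ZMod (6*m)) + K m = 2 + K m
    rfl
  have a45 : (GP (6*m) (3*m-1)).Adj (Sum.inr (2 + K m)) (Sum.inr 0) := by
    refine ⟨f45, Or.inl ?_⟩
    show (0 : ZMod (6*m)) = 2 + K m + K m
    linear_combination -hK2
  have a50 : (GP (6*m) (3*m-1)).Adj (Sum.inr 0) (Sum.inl 0) := ⟨by simp, rfl⟩
  let w : (GP (6*m) (3*m-1)).Walk (Sum.inl 0) (Sum.inl 0) :=
    Walk.cons a01 (Walk.cons a12 (Walk.cons a23 (Walk.cons a34
      (Walk.cons a45 (Walk.cons a50 Walk.nil)))))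
  have f02 : (0 : ZMod (6*m)) ≠ 2 := fun h => e2 (by linear_combination -h)
  have f01' : (0 : ZMod (6*m)) ≠ 1 := fun h => e1 (by linear_combination -h)
  have f12' : (1 : ZMod (6*m)) ≠ 2 := fun h => e1 (by linear_combination -h)
  have fK2' : (2 : ZMod (6*m)) ≠ 2 + K m := fun h => eK (by linear_combination -h)
  have fK0' : (2 + K m : ZMod (6*m)) ≠ 0 := fun h => eK2 (by linear_combination h)
  have f0K : (0 : ZMod (6*m)) ≠ 2 + K m := fun h => eK2 (by linear_combination -h)
  have f2z : (2 : ZMod (6*m)) ≠ 0 := e2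
  have hcyc : w.IsCycle := by
    refine ⟨⟨⟨?_⟩, by simp [w]⟩, ?_⟩
    · simp [w, Walk.edges, f01', f12', f02, fK2', fK0', f0K, f2z, f01'.symm, f12'.symm,
        f02.symm, fK2'.symm, fK0'.symm, f0K.symm, f2z.symm, Sym2.eq_iff]
    · simp [w, Walk.support, f01', f12', f02, fK2', fK0', f0K, f2z, f01'.symm, f12'.symm,
        f02.symm, fK2'.symm, fK0'.symm, f0K.symm, f2z.symm]
  have hle : (GP (6*m) (3*m-1)).egirth ≤ (w.length : ℕ∞) := by
    apply iInf_le_of_le (Sum.inl 0)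
    apply iInf_le_of_le w
    exact iInf_le _ hcyc
  simpa [w] using hle

include hm2 in
lemma egirth_ge : 6 ≤ (GP (6*m) (3*m-1)).egirth := by
  rw [le_egirth]
  intro a w hw
  by_contra hlt
  push_neg at hlt
  have h6 : w.length < 6 := by exact_mod_cast hlt
  have h3 := hw.three_le_length
  have hl : w.length = 3 ∨ w.length = 4 ∨ w.length = 5 := by omega
  rcases hl with h | h | h
  · obtain ⟨C, hinj, hadj⟩ := cyc_fun w hw 3 h (by decide)
    exact no3 m hm2 C hinj hadj
  · obtain ⟨C, hinj, hadj⟩ := cyc_fun w hw 4 h (by decide)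
    exact no4 m hm2 C hinj hadj
  · obtain ⟨C, hinj, hadj⟩ := cyc_fun w hw 5 h (by decide)
    exact no5 m hm2 C hinj hadj

include hm2 hme in
lemma girth_eq : (GP (6*m) (3*m-1)).girth = 6 := by
  have h : (GP (6*m) (3*m-1)).egirth = 6 :=
    le_antisymm (egirth_le m hm2 hme) (egirth_ge m hm2)
  rw [SimpleGraph.girth, h]
  rfl

end girth

section count

variable (m : ℕ) [NeZero (6*m)] (hm2 : 2 ≤ m) (hme : m % 2 = 0)

include hm2 hme in
lemma is6_Sset (i : ZMod (6*m)) : Is6CycleEdgeSet (GP (6*m) (3*m-1)) (Sset m i) := by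
  refine ⟨Ccyc m i, Ccyc_inj m hm2 i, Ccyc_adj m hm2 hme i, ?_⟩
  exact (img_eq _ _ _ _)

include hm2 hme in
lemma count_aux (e : Sym2 (ZMod (6*m) ⊕ ZMod (6*m))) (i1 i2 : ZMod (6*m))
    (hne : i1 ≠ i2)
    (hmem1 : e ∈ Sset m i1) (hmem2 : e ∈ Sset m i2)
    (hchar : ∀ i, e ∈ Sset m i → i = i1 ∨ i = i2) :
    {s : Finset (Sym2 (ZMod (6*m) ⊕ ZMod (6*m))) |
      Is6CycleEdgeSet (GP (6*m) (3*m-1)) s ∧ e ∈ s}.ncard = 2 := by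
  have hset : {s : Finset (Sym2 (ZMod (6*m) ⊕ ZMod (6*m))) |
      Is6CycleEdgeSet (GP (6*m) (3*m-1)) s ∧ e ∈ s} = {Sset m i1, Sset m i2} := by
    ext st
    simp only [Set.mem_setOf_eq, Set.mem_insert_iff, Set.mem_singleton_iff]
    constructor
    · rintro ⟨⟨C, hinj, hadj, hs⟩, hmem⟩
      obtain ⟨i, himg⟩ := classify6 m hm2 hme C hinj hadj
      have hst : st = Sset m i := hs.trans ((img_eq _ _ _ _).trans himg)
      rw [hst] at hmem ⊢
      rcases hchar i hmem with rfl | rfl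
      · exact Or.inl rfl
      · exact Or.inr rfl
    · rintro (rfl | rfl)
      · exact ⟨is6_Sset m hm2 hme i1, hmem1⟩
      · exact ⟨is6_Sset m hm2 hme i2, hmem2⟩
  rw [hset]
  exact Set.ncard_pair (fun h => hne (Sset_inj m hm2 i1 i2 h))

include hm2 hme in
lemma count_out (a : ZMod (6*m)) :
    {s : Finset (Sym2 (ZMod (6*m) ⊕ ZMod (6*m))) |
      Is6CycleEdgeSet (GP (6*m) (3*m-1)) s ∧ s(Sum.inl a, Sum.inl (a+1)) ∈ s}.ncard = 2 := by
  refine count_aux m hm2 hme _ a (a-1) ?_ (mem_out1 m a) (mem_out2 m a)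
    (fun i h => char_out m hm2 a i h)
  intro h
  exact nz1 m hm2 (by linear_combination h)

include hm2 hme in
lemma count_spoke (a : ZMod (6*m)) :
    {s : Finset (Sym2 (ZMod (6*m) ⊕ ZMod (6*m))) |
      Is6CycleEdgeSet (GP (6*m) (3*m-1)) s ∧ s(Sum.inl a, Sum.inr a) ∈ s}.ncard = 2 := by
  refine count_aux m hm2 hme _ a (a-2) ?_ (mem_spoke1 m a) (mem_spoke2 m a)
    (fun i h => char_spoke m hm2 a i h)
  intro h
  exact nz2 m hm2 (by linear_combination h)

include hm2 hme in
lemma count_inn (a : ZMod (6*m)) :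
    {s : Finset (Sym2 (ZMod (6*m) ⊕ ZMod (6*m))) |
      Is6CycleEdgeSet (GP (6*m) (3*m-1)) s ∧ s(Sum.inr a, Sum.inr (a + K m)) ∈ s}.ncard = 2 := by
  refine count_aux m hm2 hme _ (a-2) (a + K m) ?_ (mem_inn1 m a) (mem_inn2 m hm2 hme a)
    (fun i h => char_inn m hm2 hme a i h)
  intro h
  exact nzK2 m hm2 (by linear_combination -h)

end count

end GPaux


/-- For even `m ≥ 2`, every edge of `GP(6m, 3m-1)` lies in exactly two `6`-cycles;
in particular the graph is girth-regular with signature `(2,2,2)` and girth `6`. -/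
theorem GP_6m_signature (m : ℕ) [NeZero (6 * m)] (hm2 : 2 ≤ m) (hme : m % 2 = 0) :
    (GP (6 * m) (3 * m - 1)).girth = 6 ∧
    ∀ e ∈ (GP (6 * m) (3 * m - 1)).edgeSet,
      {s : Finset (Sym2 (ZMod (6 * m) ⊕ ZMod (6 * m))) |
        Is6CycleEdgeSet (GP (6 * m) (3 * m - 1)) s ∧ e ∈ s}.ncard = 2 := by
  constructor
  · exact GPaux.girth_eq m hm2 hme
  · intro e
    induction e using Sym2.ind with
    | _ x y =>
      intro he
      rw [SimpleGraph.mem_edgeSet] at he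
      obtain ⟨hne, hrel⟩ := he
      cases x with
      | inl a =>
        cases y with
        | inl b =>
            rcases hrel with rfl | rfl
            · exact GPaux.count_out m hm2 hme a
            · rw [Sym2.eq_swap]
              exact GPaux.count_out m hm2 hme b
        | inr b =>
            have : a = b := hrel
            subst this
            exact GPaux.count_spoke m hm2 hme a
      | inr a =>
        cases y with
        | inl b =>
            have : a = b := hrel
            subst this
            rw [Sym2.eq_swap]
            exact GPaux.count_spoke m hm2 hme a
        | inr b =>
            rcases hrel with rfl | rfl
            · exact GPaux.count_inn m hm2 hme a
            · rw [Sym2.eq_swap]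
              exact GPaux.count_inn m hm2 hme b
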